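/- Kraft's inequality for base lengths: if ξ is a finite set of pairwise orthogonal quantum strings whose base lengths satisfy the condensability/ prefix-free property (equivalently, each |ψ⟩ ∈ ξ is supported on strings of length ≤ L(|ψ⟩) and the supports define a prefix-free structure), then Σ_{|ψ⟩∈ξ} 2^{−L(|ψ⟩)} ≤ Σ_{|ψ⟩∈ξ} 2^{−l̄(|ψ⟩)} ≤ 1, where L is the base (maximum) length and l̄ the average length. -/

import Mathlib

open scoped Classical BigOperators

noncomputable section

/-- Quantum strings: finitely-supported amplitude functions on finite binary strings
(the Fock space ⊕ₙ (ℂ²)^{⊗n}). -/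
abbrev QStr := (List Bool) →₀ ℂ

/-- Inner product ⟨φ|ψ⟩ = Σ conj(φ x) ψ x. -/
noncomputable def inn (φ ψ : QStr) : ℂ :=
  ∑ x ∈ φ.support ∪ ψ.support, (starRingEnd ℂ) (φ x) * ψ x

/-- Concatenation |φχ⟩, extended bilinearly from basis strings. -/
noncomputable def qconcat (φ χ : QStr) : QStr :=
  φ.sum fun x a => χ.sum fun y b => Finsupp.single (x ++ y) (a * b)

/-- |φ⟩ is a (quantum) prefix of |ψ⟩. -/
def QIsPrefix (φ ψ : QStr) : Prop :=
  ∃ χ : QStr, χ [] = 0 ∧ inn (qconcat φ χ) ψ ≠ 0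

/-- Base length: maximal classical length in the support. -/
noncomputable def baseLen (ψ : QStr) : ℕ := ψ.support.sup List.length

/-- Average length. -/
noncomputable def avgLen (ψ : QStr) : ℝ := ∑ x ∈ ψ.support, ‖ψ x‖ ^ 2 * (x.length : ℝ)

namespace QKraftAux

lemma append_inj (y : List Bool) : Function.Injective (fun x : List Bool => x ++ y) :=
  fun _ _ h => List.append_cancel_right h

lemma inn_eq_sum {φ ψ : QStr} {S : Finset (List Bool)}
    (hφ : φ.support ⊆ S) (hψ : ψ.support ⊆ S) :
    inn φ ψ = ∑ x ∈ S, (starRingEnd ℂ) (φ x) * ψ x := by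
  refine Finset.sum_subset (Finset.union_subset hφ hψ) ?_
  intro x _ hx
  have : φ x = 0 := by
    by_contra h
    exact hx (Finset.mem_union_left _ (Finsupp.mem_support_iff.2 h))
  simp [this]

lemma inn_conj (φ ψ : QStr) : inn φ ψ = (starRingEnd ℂ) (inn ψ φ) := by
  unfold inn
  rw [Finset.union_comm, map_sum]
  simp only [map_mul, Complex.conj_conj]
  exact Finset.sum_congr rfl fun x _ => mul_comm _ _

lemma inn_single_right (ψ : QStr) (z : List Bool) :
    inn ψ (Finsupp.single z 1) = (starRingEnd ℂ) (ψ z) := by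
  rw [inn_eq_sum (S := ψ.support ∪ {z}) Finset.subset_union_left
      (Finsupp.support_single_subset.trans Finset.subset_union_right)]
  rw [Finset.sum_eq_single z]
  · simp
  · intro b _ hb
    simp [Finsupp.single_eq_of_ne' (Ne.symm hb)]
  · intro h
    exact absurd (Finset.mem_union_right _ (Finset.mem_singleton_self z)) h

noncomputable def shift (ψ : QStr) (y : List Bool) : QStr :=
  Finsupp.mapDomain (fun x => x ++ y) ψ

lemma shift_apply (ψ : QStr) (y x : List Bool) : shift ψ y (x ++ y) = ψ x :=
  Finsupp.mapDomain_apply (append_inj y) ψ x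

lemma support_shift (ψ : QStr) (y : List Bool) :
    (shift ψ y).support ⊆ ψ.support.image (fun x => x ++ y) :=
  Finsupp.mapDomain_support

lemma shift_shift (ψ : QStr) (w y : List Bool) :
    shift (shift ψ w) y = shift ψ (w ++ y) := by
  unfold shift
  rw [← Finsupp.mapDomain_comp]
  congr 1
  funext x
  simp

lemma qconcat_single (ψ : QStr) (y : List Bool) :
    qconcat ψ (Finsupp.single y (1:ℂ)) = shift ψ y := by
  unfold qconcat shift Finsupp.mapDomain
  refine Finsupp.sum_congr fun x _ => ?_
  rw [Finsupp.sum_single_index (by simp)]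
  simp

lemma inn_shift_shift (φ ψ : QStr) (y : List Bool) :
    inn (shift φ y) (shift ψ y) = inn φ ψ := by
  rw [inn_eq_sum (S := (φ.support ∪ ψ.support).image (fun x => x ++ y))
      ((support_shift φ y).trans (Finset.image_subset_image Finset.subset_union_left))
      ((support_shift ψ y).trans (Finset.image_subset_image Finset.subset_union_right)),
    Finset.sum_image (fun a _ b _ h => append_inj y h)]
  unfold inn
  exact (Finset.sum_congr rfl fun x _ => by rw [shift_apply, shift_apply]).symm

lemma inn_self (ψ : QStr) : inn ψ ψ = ((∑ x ∈ ψ.support, ‖ψ x‖ ^ 2 : ℝ) : ℂ) := by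
  unfold inn
  rw [Finset.union_self]
  push_cast
  exact Finset.sum_congr rfl fun x _ => RCLike.conj_mul (ψ x)

def toEuc (S : Finset (List Bool)) (ψ : QStr) : EuclideanSpace ℂ S :=
  WithLp.toLp 2 (fun x : S => ψ x.1)

lemma inner_toEuc {S : Finset (List Bool)} {φ ψ : QStr}
    (hφ : φ.support ⊆ S) (hψ : ψ.support ⊆ S) :
    (inner ℂ (toEuc S φ) (toEuc S ψ) : ℂ) = inn φ ψ := by
  rw [inn_eq_sum hφ hψ]
  simp only [PiLp.inner_apply, RCLike.inner_apply']
  rw [← Finset.sum_coe_sort S (fun x => (starRingEnd ℂ) (φ x) * ψ x)]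
  rfl

lemma bessel_key (n : ℕ) (ξ : Fin n → QStr)
    (hnorm : ∀ i, ∑ x ∈ (ξ i).support, ‖ξ i x‖ ^ 2 = 1)
    (horth : ∀ i j, i ≠ j → inn (ξ i) (ξ j) = 0)
    (hpf : ∀ i j, ∀ χ : QStr, χ [] = 0 → inn (qconcat (ξ i) χ) (ξ j) = 0)
    (L : ℕ) (z : List Bool) (hz : z.length = L) :
    ∑ i, ∑ m ∈ Finset.range (L+1), ‖ξ i (z.take m)‖ ^ 2 ≤ 1 := by
  have inn_self_one : ∀ i, inn (ξ i) (ξ i) = 1 := by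
    intro i; rw [inn_self, hnorm i]; norm_num
  have hmix : ∀ i j : Fin n, ∀ m m' : ℕ, m < m' → m' ≤ L →
      inn (shift (ξ i) (z.drop m)) (shift (ξ j) (z.drop m')) = 0 := by
    intro i j m m' hmm hm'
    set w0 : List Bool := (z.drop m).take (m' - m) with hw0
    have h1 : z.drop m = w0 ++ z.drop m' := by
      rw [hw0]
      have := List.take_append_drop (m' - m) (z.drop m)
      rw [List.drop_drop] at this
      rw [show m + (m' - m) = m' by omega] at this
      exact this.symm
    have hw0len : w0.length = m' - m := by
      rw [hw0, List.length_take, List.length_drop, hz]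
      omega
    have hw0ne : w0 ≠ [] := by
      intro h
      rw [h] at hw0len
      simp at hw0len
      omega
    rw [h1, ← shift_shift, inn_shift_shift, ← qconcat_single]
    exact hpf i j _ (Finsupp.single_eq_of_ne' hw0ne)
  classical
  set S : Finset (List Bool) :=
    (Finset.univ.biUnion fun p : Fin n × Fin (L+1) =>
      (shift (ξ p.1) (z.drop (p.2 : ℕ))).support)
      ∪ (Finsupp.single z (1:ℂ)).support with hS
  have hsub : ∀ p : Fin n × Fin (L+1), (shift (ξ p.1) (z.drop (p.2:ℕ))).support ⊆ S := by
    intro p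
    rw [hS]
    exact (Finset.subset_biUnion_of_mem
      (fun p : Fin n × Fin (L+1) => (shift (ξ p.1) (z.drop (p.2:ℕ))).support)
      (Finset.mem_univ p)).trans Finset.subset_union_left
  have hzsub : (Finsupp.single z (1:ℂ)).support ⊆ S := Finset.subset_union_right
  set v : Fin n × Fin (L+1) → EuclideanSpace ℂ S :=
    fun p => toEuc S (shift (ξ p.1) (z.drop (p.2:ℕ))) with hv
  have hON : Orthonormal ℂ v := by
    rw [orthonormal_iff_ite]
    intro p q
    rw [hv]
    dsimp only
    rw [inner_toEuc (hsub p) (hsub q)]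
    by_cases hpq : p = q
    · subst hpq
      rw [inn_shift_shift, inn_self_one, if_pos rfl]
    · rw [if_neg hpq]
      rcases lt_trichotomy ((p.2:ℕ)) ((q.2:ℕ)) with h|h|h
      · exact hmix _ _ _ _ h (Nat.lt_succ_iff.mp q.2.isLt)
      · have h2 : p.2 = q.2 := Fin.ext h
        have hij : p.1 ≠ q.1 := by
          intro h1
          exact hpq (Prod.ext h1 h2)
        rw [h]
        rw [inn_shift_shift]
        exact horth _ _ hij
      · rw [inn_conj, hmix _ _ _ _ h (Nat.lt_succ_iff.mp p.2.isLt)]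
        simp
  have hb := hON.sum_inner_products_le (s := Finset.univ) (toEuc S (Finsupp.single z (1:ℂ)))
  have hxnorm : ‖toEuc S (Finsupp.single z (1:ℂ))‖ ^ 2 = 1 := by
    have h1 : (inner ℂ (toEuc S (Finsupp.single z (1:ℂ)))
        (toEuc S (Finsupp.single z (1:ℂ))) : ℂ) = 1 := by
      rw [inner_toEuc hzsub hzsub, inn_single_right]
      simp
    rw [norm_sq_eq_re_inner (𝕜 := ℂ), h1]
    simp
  have hinner : ∀ p : Fin n × Fin (L+1),
      ‖(inner ℂ (v p) (toEuc S (Finsupp.single z (1:ℂ))) : ℂ)‖ = ‖ξ p.1 (z.take (p.2:ℕ))‖ := by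
    intro p
    rw [hv]
    dsimp only
    rw [inner_toEuc (hsub p) hzsub, inn_single_right]
    have h2 := shift_apply (ξ p.1) (z.drop (p.2:ℕ)) (z.take (p.2:ℕ))
    rw [List.take_append_drop] at h2
    rw [h2, RCLike.norm_conj]
  calc ∑ i, ∑ m ∈ Finset.range (L+1), ‖ξ i (z.take m)‖ ^ 2
      = ∑ p : Fin n × Fin (L+1), ‖ξ p.1 (z.take (p.2:ℕ))‖ ^ 2 := by
        rw [Fintype.sum_prod_type]
        exact Finset.sum_congr rfl fun i _ => (Fin.sum_univ_eq_sum_range _ _).symm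
    _ = ∑ p : Fin n × Fin (L+1),
          ‖(inner ℂ (v p) (toEuc S (Finsupp.single z (1:ℂ))) : ℂ)‖ ^ 2 :=
        Finset.sum_congr rfl fun p _ => by rw [hinner p]
    _ ≤ ‖toEuc S (Finsupp.single z (1:ℂ))‖ ^ 2 := hb
    _ = 1 := hxnorm

def Z (L : ℕ) : Finset (List Bool) :=
  (Finset.univ : Finset (Fin L → Bool)).image List.ofFn

lemma mem_Z {L : ℕ} {x : List Bool} : x ∈ Z L ↔ x.length = L := by
  constructor
  · intro h
    rcases Finset.mem_image.mp h with ⟨f, _, rfl⟩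
    simp
  · intro h
    refine Finset.mem_image.mpr ⟨fun i => x.get (Fin.cast h.symm i), Finset.mem_univ _, ?_⟩
    apply List.ext_getElem
    · simp [h]
    · intro i h1 h2
      simp

lemma card_Z (L : ℕ) : (Z L).card = 2 ^ L := by
  rw [Z, Finset.card_image_of_injective _ List.ofFn_injective]
  simp

lemma sum_Z_take {L m : ℕ} (hm : m ≤ L) (g : List Bool → ℝ) :
    ∑ z ∈ Z L, g (z.take m) = 2 ^ (L - m) * ∑ x ∈ Z m, g x := by
  have h : ∑ z ∈ Z L, g (z.take m) = ∑ p ∈ Z m ×ˢ Z (L - m), g p.1 := by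
    refine Finset.sum_nbij' (fun z => (z.take m, z.drop m)) (fun p => p.1 ++ p.2)
      ?_ ?_ ?_ ?_ ?_
    · intro z hz
      have hzl := mem_Z.mp hz
      refine Finset.mem_product.mpr ⟨mem_Z.mpr ?_, mem_Z.mpr ?_⟩
      · rw [List.length_take, hzl]; omega
      · rw [List.length_drop, hzl]
    · intro p hp
      rcases Finset.mem_product.mp hp with ⟨h1, h2⟩
      refine mem_Z.mpr ?_
      rw [List.length_append, mem_Z.mp h1, mem_Z.mp h2]
      omega
    · intro z _
      exact List.take_append_drop m z
    · intro p hp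
      rcases Finset.mem_product.mp hp with ⟨h1, h2⟩
      have hl := mem_Z.mp h1
      exact Prod.ext (List.take_left' hl) (List.drop_left' hl)
    · intro z _
      rfl
  rw [h, Finset.sum_product]
  have h2 : ∀ x ∈ Z m, ∑ _y ∈ Z (L-m), g x = 2^(L-m) * g x := by
    intro x _
    rw [Finset.sum_const, card_Z, nsmul_eq_mul]
    push_cast
    ring
  rw [Finset.sum_congr rfl h2, Finset.mul_sum]

lemma weighted_kraft (n : ℕ) (ξ : Fin n → QStr)
    (hnorm : ∀ i, ∑ x ∈ (ξ i).support, ‖ξ i x‖ ^ 2 = 1)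
    (horth : ∀ i j, i ≠ j → inn (ξ i) (ξ j) = 0)
    (hpf : ∀ i j, ∀ χ : QStr, χ [] = 0 → inn (qconcat (ξ i) χ) (ξ j) = 0) :
    ∑ i, ∑ x ∈ (ξ i).support, ‖ξ i x‖ ^ 2 * (2:ℝ) ^ (-(x.length : ℝ)) ≤ 1 := by
  set L : ℕ := Finset.univ.sup fun i => baseLen (ξ i) with hL
  have hbase : ∀ i, ∀ x ∈ (ξ i).support, x.length ≤ L := by
    intro i x hx
    exact le_trans (Finset.le_sup (f := List.length) hx)
      (Finset.le_sup (f := fun i => baseLen (ξ i)) (Finset.mem_univ i))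
  have h1 : ∑ z ∈ Z L, (∑ i, ∑ m ∈ Finset.range (L+1), ‖ξ i (z.take m)‖ ^ 2)
      ≤ (2:ℝ) ^ L := by
    calc ∑ z ∈ Z L, (∑ i, ∑ m ∈ Finset.range (L+1), ‖ξ i (z.take m)‖ ^ 2)
        ≤ (Z L).card • (1:ℝ) := Finset.sum_le_card_nsmul _ _ _
          (fun z hz => bessel_key n ξ hnorm horth hpf L z (mem_Z.mp hz))
      _ = (2:ℝ) ^ L := by rw [card_Z]; simp
  have h2 : ∑ z ∈ Z L, (∑ i, ∑ m ∈ Finset.range (L+1), ‖ξ i (z.take m)‖ ^ 2)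
      = ∑ i, ∑ m ∈ Finset.range (L+1), (2:ℝ) ^ (L - m) * ∑ x ∈ Z m, ‖ξ i x‖ ^ 2 := by
    rw [Finset.sum_comm]
    refine Finset.sum_congr rfl fun i _ => ?_
    rw [Finset.sum_comm]
    refine Finset.sum_congr rfl fun m hm => ?_
    exact sum_Z_take (Nat.lt_succ_iff.mp (Finset.mem_range.mp hm)) (fun x => ‖ξ i x‖ ^ 2)
  have h3 : ∀ i, ∑ x ∈ (ξ i).support, ‖ξ i x‖ ^ 2 * (2:ℝ) ^ (-(x.length : ℝ))
      = ∑ m ∈ Finset.range (L+1), (2:ℝ) ^ (-(m:ℝ)) * ∑ x ∈ Z m, ‖ξ i x‖ ^ 2 := by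
    intro i
    have hdisj : (↑(Finset.range (L+1)) : Set ℕ).PairwiseDisjoint Z := by
      intro a _ b _ hab
      simp only [Function.onFun, Finset.disjoint_left]
      intro x hxa hxb
      exact hab ((mem_Z.mp hxa).symm.trans (mem_Z.mp hxb))
    have key : ∑ x ∈ (Finset.range (L+1)).biUnion Z,
          ‖ξ i x‖^2 * (2:ℝ)^(-(x.length:ℝ))
        = ∑ m ∈ Finset.range (L+1), ∑ x ∈ Z m, ‖ξ i x‖^2 * (2:ℝ)^(-(x.length:ℝ)) :=
      Finset.sum_biUnion hdisj
    have hsub : (ξ i).support ⊆ (Finset.range (L+1)).biUnion Z := fun x hx =>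
      Finset.mem_biUnion.mpr ⟨x.length,
        Finset.mem_range.mpr (Nat.lt_succ_of_le (hbase i x hx)), mem_Z.mpr rfl⟩
    rw [Finset.sum_subset hsub
      (fun x _ hx => by simp [Finsupp.notMem_support_iff.mp hx]), key]
    refine Finset.sum_congr rfl fun m _ => ?_
    rw [Finset.mul_sum]
    exact Finset.sum_congr rfl fun x hx => by rw [mem_Z.mp hx]; ring
  have hpow : ∀ m ∈ Finset.range (L+1),
      (2:ℝ) ^ (-(m:ℝ)) = (2:ℝ) ^ (L - m) / 2 ^ L := by
    intro m hm
    have hm' : m ≤ L := Nat.lt_succ_iff.mp (Finset.mem_range.mp hm)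
    rw [Real.rpow_neg (by norm_num), Real.rpow_natCast]
    rw [inv_eq_one_div, div_eq_div_iff (by positivity) (by positivity), one_mul,
      ← pow_add]
    congr 1
    omega
  have final : ∑ i, ∑ x ∈ (ξ i).support, ‖ξ i x‖^2 * (2:ℝ)^(-(x.length:ℝ))
      = (∑ i, ∑ m ∈ Finset.range (L+1), (2:ℝ)^(L-m) * ∑ x ∈ Z m, ‖ξ i x‖^2) / 2^L := by
    rw [Finset.sum_div]
    refine Finset.sum_congr rfl fun i _ => ?_
    rw [h3 i, Finset.sum_div]
    refine Finset.sum_congr rfl fun m hm => ?_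
    rw [hpow m hm]
    ring
  rw [final, div_le_one (by positivity), ← h2]
  exact h1

lemma convexOn_two_rpow_neg : ConvexOn ℝ Set.univ (fun t : ℝ => (2:ℝ) ^ (-t)) := by
  have h := convexOn_exp.comp_affineMap
      (((-Real.log 2) • (LinearMap.id : ℝ →ₗ[ℝ] ℝ)).toAffineMap)
  have he : (fun t : ℝ => (2:ℝ) ^ (-t))
      = Real.exp ∘ ⇑(((-Real.log 2) • (LinearMap.id : ℝ →ₗ[ℝ] ℝ)).toAffineMap) := by
    funext t
    simp only [Function.comp_apply, LinearMap.coe_toAffineMap, LinearMap.smul_apply,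
      LinearMap.id_coe, id_eq, smul_eq_mul]
    rw [Real.rpow_def_of_pos (by norm_num)]
    ring_nf
  rw [he]
  simpa using h

lemma jensen (ψ : QStr) (h1 : ∑ x ∈ ψ.support, ‖ψ x‖ ^ 2 = 1) :
    (2:ℝ) ^ (-avgLen ψ) ≤ ∑ x ∈ ψ.support, ‖ψ x‖ ^ 2 * (2:ℝ) ^ (-(x.length : ℝ)) := by
  have h := convexOn_two_rpow_neg.map_sum_le (t := ψ.support)
      (w := fun x => ‖ψ x‖ ^ 2) (p := fun x => (x.length : ℝ))
      (fun x _ => by positivity) h1 (fun x _ => Set.mem_univ _)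
  simpa [avgLen, smul_eq_mul] using h

lemma avg_le_base (ψ : QStr) (h1 : ∑ x ∈ ψ.support, ‖ψ x‖ ^ 2 = 1) :
    avgLen ψ ≤ (baseLen ψ : ℝ) := by
  calc avgLen ψ ≤ ∑ x ∈ ψ.support, ‖ψ x‖ ^ 2 * (baseLen ψ : ℝ) := by
        refine Finset.sum_le_sum fun x hx => ?_
        have hb : (x.length : ℝ) ≤ (baseLen ψ : ℝ) := by
          exact_mod_cast Finset.le_sup (f := List.length) hx
        exact mul_le_mul_of_nonneg_left hb (by positivity)
    _ = (baseLen ψ : ℝ) := by rw [← Finset.sum_mul, h1, one_mul]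

end QKraftAux

/-- Kraft's inequality for base and average lengths of an orthonormal
prefix free (condensable) family. -/
theorem stmt_6 (n : ℕ) (ξ : Fin n → QStr)
    (hnorm : ∀ i, ∑ x ∈ (ξ i).support, ‖ξ i x‖ ^ 2 = 1)
    (horth : ∀ i j, i ≠ j → inn (ξ i) (ξ j) = 0)
    (hpf : ∀ i j, ∀ χ : QStr, χ [] = 0 → inn (qconcat (ξ i) χ) (ξ j) = 0) :
    (∑ i, (2 : ℝ) ^ (-(baseLen (ξ i) : ℝ))) ≤ (∑ i, (2 : ℝ) ^ (-avgLen (ξ i)))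
      ∧ (∑ i, (2 : ℝ) ^ (-avgLen (ξ i))) ≤ 1 := by
  have h2 : (∑ i, (2:ℝ) ^ (-avgLen (ξ i))) ≤ 1 := by
    calc ∑ i, (2:ℝ) ^ (-avgLen (ξ i))
        ≤ ∑ i, ∑ x ∈ (ξ i).support, ‖ξ i x‖^2 * (2:ℝ)^(-(x.length:ℝ)) :=
          Finset.sum_le_sum fun i _ => QKraftAux.jensen (ξ i) (hnorm i)
      _ ≤ 1 := QKraftAux.weighted_kraft n ξ hnorm horth hpf
  refine ⟨Finset.sum_le_sum fun i _ => ?_, h2⟩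
  apply Real.rpow_le_rpow_of_exponent_le (by norm_num)
  exact neg_le_neg (QKraftAux.avg_le_base (ξ i) (hnorm i))

end
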